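/- Let R be a graded right Artinian G-graded ring. Then every nonzero graded two-sided ideal of R contains a minimal graded left ideal. -/

import Mathlib

open DirectSum

universe u v w

variable {G : Type u} [Group G] [DecidableEq G]
variable {R : Type v} [Ring R]

/-- `𝒜` is a `G`-grading of the ring `R`: homogeneous components are additive
subgroups, `1` is homogeneous of trivial degree, multiplication respects degrees,
and `R` is the internal direct sum of the components. -/
def IsGRing (𝒜 : G → AddSubgroup R) : Prop :=
  (1 : R) ∈ 𝒜 1 ∧
  (∀ (g h : G) (a b : R), a ∈ 𝒜 g → b ∈ 𝒜 h → a * b ∈ 𝒜 (g * h)) ∧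
  DirectSum.IsInternal 𝒜

/-- A left ideal is graded when it is spanned by its homogeneous elements. -/
def IsGradedLeftIdeal (𝒜 : G → AddSubgroup R) (I : Submodule R R) : Prop :=
  I = Submodule.span R ((I : Set R) ∩ ⋃ g, (𝒜 g : Set R))

/-- A minimal graded left ideal (a graded-simple graded left submodule of `R`). -/
def IsMinGradedLeftIdeal (𝒜 : G → AddSubgroup R) (S : Submodule R R) : Prop :=
  IsGradedLeftIdeal 𝒜 S ∧ S ≠ ⊥ ∧
    ∀ T : Submodule R R, T ≤ S → IsGradedLeftIdeal 𝒜 T → T = ⊥ ∨ T = S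

/-- A maximal graded left ideal. -/
def IsMaxGradedLeftIdeal (𝒜 : G → AddSubgroup R) (I : Submodule R R) : Prop :=
  IsGradedLeftIdeal 𝒜 I ∧ I ≠ ⊤ ∧
    ∀ J : Submodule R R, IsGradedLeftIdeal 𝒜 J → I < J → J = ⊤

/-- The graded Jacobson radical: intersection of all maximal graded left ideals. -/
def grJacobson (𝒜 : G → AddSubgroup R) : Submodule R R :=
  sInf {I : Submodule R R | IsMaxGradedLeftIdeal 𝒜 I}

/-- Left annihilator of a subset of `R`. -/
def annLset (X : Set R) : Set R := {r : R | ∀ x ∈ X, r * x = 0}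

/-- Right annihilator of a subset of `R`. -/
def annRset (X : Set R) : Set R := {r : R | ∀ x ∈ X, x * r = 0}

/-- Left annihilator of an element, as a left ideal. -/
def annLIdeal (x : R) : Submodule R R where
  carrier := {r : R | r * x = 0}
  add_mem' := by
    intro a b ha hb
    simp only [Set.mem_setOf_eq] at *
    rw [add_mul, ha, hb, add_zero]
  zero_mem' := by simp
  smul_mem' := by
    intro c a ha
    simp only [Set.mem_setOf_eq, smul_eq_mul] at *
    rw [mul_assoc, ha, mul_zero]

/-- A left ideal is essential if it meets every nonzero left ideal nontrivially. -/
def IsEssentialLeftIdeal (I : Submodule R R) : Prop :=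
  ∀ J : Submodule R R, J ≠ ⊥ → I ⊓ J ≠ ⊥

/-- Homogeneous part of degree `g` of the graded singular ideal. -/
def grSingSet (𝒜 : G → AddSubgroup R) (g : G) : Set R :=
  {x : R | x ∈ 𝒜 g ∧ IsEssentialLeftIdeal (annLIdeal x)}

/-- The graded singular ideal `Z^gr(R) = ⊕_g Z^gr(R)_g`. -/
def grSing (𝒜 : G → AddSubgroup R) : AddSubgroup R :=
  AddSubgroup.closure (⋃ g, grSingSet 𝒜 g)

/-- `R` is graded left self-injective (graded Baer criterion): every morphism of
degree `σ` from a graded left ideal to `R` is right multiplication by an element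
of degree `σ`. -/
def GrLeftSelfInjective (𝒜 : G → AddSubgroup R) : Prop :=
  ∀ I : Submodule R R, IsGradedLeftIdeal 𝒜 I → ∀ σ : G, ∀ f : I →ₗ[R] R,
    (∀ (g : G) (x : I), (x : R) ∈ 𝒜 g → f x ∈ 𝒜 (g * σ)) →
    ∃ m ∈ 𝒜 σ, ∀ x : I, f x = (x : R) * m

/-- Ascending chain condition on graded left ideals. -/
def GrLeftNoetherian (𝒜 : G → AddSubgroup R) : Prop :=
  ∀ f : ℕ → Submodule R R, (∀ n, IsGradedLeftIdeal 𝒜 (f n)) → Monotone f →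
    ∃ n, ∀ m, n ≤ m → f m = f n

/-- Descending chain condition on graded left ideals. -/
def GrLeftArtinian (𝒜 : G → AddSubgroup R) : Prop :=
  ∀ f : ℕ → Submodule R R, (∀ n, IsGradedLeftIdeal 𝒜 (f n)) → Antitone f →
    ∃ n, ∀ m, n ≤ m → f m = f n

/-- Graded von Neumann regularity. -/
def GrVNRegular (𝒜 : G → AddSubgroup R) : Prop :=
  ∀ (g : G) (a : R), a ∈ 𝒜 g → ∃ b : R, a = a * b * a

/-- Graded semisimplicity: `R` is the sum of its minimal graded left ideals. -/
def GrSemisimple (𝒜 : G → AddSubgroup R) : Prop :=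
  sSup {S : Submodule R R | IsMinGradedLeftIdeal 𝒜 S} = (⊤ : Submodule R R)

/-- `ℳ` is a `G`-grading of the left `R`-module `M`, compatible with `𝒜`. -/
def IsGModule (𝒜 : G → AddSubgroup R) {M : Type w} [AddCommGroup M] [Module R M]
    (ℳ : G → AddSubgroup M) : Prop :=
  (∀ (g h : G) (a : R) (m : M), a ∈ 𝒜 g → m ∈ ℳ h → a • m ∈ ℳ (g * h)) ∧
  DirectSum.IsInternal ℳ

/-- A submodule is graded when it is spanned by its homogeneous elements. -/
def IsGradedSubmodule {M : Type w} [AddCommGroup M] [Module R M]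
    (ℳ : G → AddSubgroup M) (N : Submodule R M) : Prop :=
  N = Submodule.span R ((N : Set M) ∩ ⋃ g, (ℳ g : Set M))

/-- A graded right ideal: an additive subgroup closed under right multiplication
and generated (as an additive subgroup) by its homogeneous elements. -/
def IsGradedRightIdealA (𝒜 : G → AddSubgroup R) (I : AddSubgroup R) : Prop :=
  (∀ x ∈ I, ∀ r : R, x * r ∈ I) ∧
  I = AddSubgroup.closure ((I : Set R) ∩ ⋃ g, (𝒜 g : Set R))

/-- Descending chain condition on graded right ideals. -/
def GrRightArtinian (𝒜 : G → AddSubgroup R) : Prop :=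
  ∀ f : ℕ → AddSubgroup R, (∀ n, IsGradedRightIdealA 𝒜 (f n)) → Antitone f →
    ∃ n, ∀ m, n ≤ m → f m = f n


namespace GradedAux

open AddSubgroup

variable {G : Type u} [Group G] [DecidableEq G]
variable {R : Type v} [Ring R]
variable {𝒜 : G → AddSubgroup R}

noncomputable def gdec (h𝒜 : IsGRing 𝒜) : R ≃+ ⨁ g, 𝒜 g :=
  (AddEquiv.ofBijective (DirectSum.coeAddMonoidHom 𝒜) h𝒜.2.2).symm

noncomputable def gp (h𝒜 : IsGRing 𝒜) (g : G) : R →+ R where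
  toFun r := (gdec h𝒜 r g : R)
  map_zero' := by simp
  map_add' x y := by simp [DirectSum.add_apply]

variable (h𝒜 : IsGRing 𝒜)

theorem gp_mem (g : G) (r : R) : gp h𝒜 g r ∈ 𝒜 g := (gdec h𝒜 r g).2

theorem gdec_of {g : G} {a : R} (ha : a ∈ 𝒜 g) :
    gdec h𝒜 a = DirectSum.of (fun g => 𝒜 g) g ⟨a, ha⟩ := by
  rw [gdec, AddEquiv.symm_apply_eq]
  exact (DirectSum.coeAddMonoidHom_of 𝒜 g ⟨a, ha⟩).symm

theorem gp_same {g : G} {a : R} (ha : a ∈ 𝒜 g) : gp h𝒜 g a = a := by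
  show ((gdec h𝒜 a) g : R) = a
  rw [gdec_of h𝒜 ha, DirectSum.of_eq_same]

theorem gp_ne {g h : G} {a : R} (ha : a ∈ 𝒜 g) (hne : h ≠ g) : gp h𝒜 h a = 0 := by
  show ((gdec h𝒜 a) h : R) = 0
  rw [gdec_of h𝒜 ha, DirectSum.of_eq_of_ne _ _ _ hne]
  rfl

theorem gp_support (r : R) :
    ∃ s : Finset G, (∀ g, g ∉ s → gp h𝒜 g r = 0) ∧ ∑ g ∈ s, gp h𝒜 g r = r := by
  classical
  refine ⟨(gdec h𝒜 r).support, fun g hg => ?_, ?_⟩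
  · show ((gdec h𝒜 r) g : R) = 0
    rw [DFinsupp.notMem_support_iff.mp hg]; rfl
  · have h1 := DirectSum.sum_support_of (gdec h𝒜 r)
    have h3 : ∀ z, (gdec h𝒜).symm z = DirectSum.coeAddMonoidHom 𝒜 z := fun z => rfl
    calc ∑ g ∈ (gdec h𝒜 r).support, gp h𝒜 g r
        = ∑ g ∈ (gdec h𝒜 r).support,
            DirectSum.coeAddMonoidHom 𝒜 (DirectSum.of (fun g => 𝒜 g) g (gdec h𝒜 r g)) := by
          refine Finset.sum_congr rfl fun g _ => ?_
          rw [DirectSum.coeAddMonoidHom_of]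
          rfl
      _ = DirectSum.coeAddMonoidHom 𝒜 (∑ g ∈ (gdec h𝒜 r).support,
            DirectSum.of (fun g => 𝒜 g) g (gdec h𝒜 r g)) := (map_sum _ _ _).symm
      _ = DirectSum.coeAddMonoidHom 𝒜 (gdec h𝒜 r) := by rw [h1]
      _ = (gdec h𝒜).symm (gdec h𝒜 r) := (h3 _).symm
      _ = r := AddEquiv.symm_apply_apply _ _

theorem exists_gp_ne_zero {r : R} (hr : r ≠ 0) : ∃ g, gp h𝒜 g r ≠ 0 := by
  by_contra h
  push_neg at h
  obtain ⟨s, _, hsum⟩ := gp_support h𝒜 r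
  apply hr
  rw [← hsum]
  exact Finset.sum_eq_zero fun g _ => h g

theorem gp_mul_left {d : G} {a : R} (ha : a ∈ 𝒜 d) (b : R) (g : G) :
    gp h𝒜 g (a * b) = a * gp h𝒜 (d⁻¹ * g) b := by
  obtain ⟨s, hs0, hsum⟩ := gp_support h𝒜 b
  have hab : a * b = ∑ k ∈ s, a * gp h𝒜 k b := by rw [← Finset.mul_sum, hsum]
  rw [hab, map_sum]
  have hterm : ∀ k ∈ s, gp h𝒜 g (a * gp h𝒜 k b)
      = if k = d⁻¹ * g then a * gp h𝒜 (d⁻¹ * g) b else 0 := by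
    intro k _
    have hmem : a * gp h𝒜 k b ∈ 𝒜 (d * k) := h𝒜.2.1 _ _ _ _ ha (gp_mem h𝒜 k b)
    by_cases hk : k = d⁻¹ * g
    · subst hk
      rw [if_pos rfl]
      have : d * (d⁻¹ * g) = g := by group
      rw [this] at hmem
      exact gp_same h𝒜 hmem
    · rw [if_neg hk]
      refine gp_ne h𝒜 hmem ?_
      intro hgg
      exact hk (by rw [hgg]; group)
  rw [Finset.sum_congr rfl hterm, Finset.sum_ite_eq' s (d⁻¹ * g) (fun _ => a * gp h𝒜 (d⁻¹ * g) b)]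
  by_cases hmem : d⁻¹ * g ∈ s
  · rw [if_pos hmem]
  · rw [if_neg hmem, hs0 _ hmem, mul_zero]

theorem gp_mul_right {d : G} {b : R} (hb : b ∈ 𝒜 d) (a : R) (g : G) :
    gp h𝒜 g (a * b) = gp h𝒜 (g * d⁻¹) a * b := by
  obtain ⟨s, hs0, hsum⟩ := gp_support h𝒜 a
  have hab : a * b = ∑ k ∈ s, gp h𝒜 k a * b := by rw [← Finset.sum_mul, hsum]
  rw [hab, map_sum]
  have hterm : ∀ k ∈ s, gp h𝒜 g (gp h𝒜 k a * b)
      = if k = g * d⁻¹ then gp h𝒜 (g * d⁻¹) a * b else 0 := by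
    intro k _
    have hmem : gp h𝒜 k a * b ∈ 𝒜 (k * d) := h𝒜.2.1 _ _ _ _ (gp_mem h𝒜 k a) hb
    by_cases hk : k = g * d⁻¹
    · subst hk
      rw [if_pos rfl]
      have : g * d⁻¹ * d = g := by group
      rw [this] at hmem
      exact gp_same h𝒜 hmem
    · rw [if_neg hk]
      refine gp_ne h𝒜 hmem ?_
      intro hgg
      exact hk (by rw [hgg]; group)
  rw [Finset.sum_congr rfl hterm, Finset.sum_ite_eq' s (g * d⁻¹) (fun _ => gp h𝒜 (g * d⁻¹) a * b)]
  by_cases hmem : g * d⁻¹ ∈ s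
  · rw [if_pos hmem]
  · rw [if_neg hmem, hs0 _ hmem, zero_mul]

def CC (h𝒜 : IsGRing 𝒜) (S : Set R) : Prop := ∀ r ∈ S, ∀ g, gp h𝒜 g r ∈ S

def GRI (h𝒜 : IsGRing 𝒜) (K : AddSubgroup R) : Prop :=
  (∀ x ∈ K, ∀ r : R, x * r ∈ K) ∧ CC h𝒜 (K : Set R)

theorem mem_closure_of_cc {S : Set R} (hcc : CC h𝒜 S) {x : R} (hx : x ∈ S) :
    x ∈ AddSubgroup.closure (S ∩ ⋃ g, (𝒜 g : Set R)) := by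
  obtain ⟨s, _, hsum⟩ := gp_support h𝒜 x
  rw [← hsum]
  refine AddSubgroup.sum_mem _ fun g _ => AddSubgroup.subset_closure ?_
  exact ⟨hcc x hx g, Set.mem_iUnion.mpr ⟨g, gp_mem h𝒜 g x⟩⟩

theorem cc_of_closed_gens {S : Set R}
    (hS : ∀ x ∈ S, ∀ g, gp h𝒜 g x ∈ AddSubgroup.closure S) :
    CC h𝒜 ((AddSubgroup.closure S : AddSubgroup R) : Set R) := by
  intro x hx g
  induction hx using AddSubgroup.closure_induction with
  | mem y hy => exact hS y hy g
  | zero => rw [map_zero]; exact zero_mem _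
  | add y z _ _ hy hz => rw [map_add]; exact add_mem hy hz
  | neg y _ hy => rw [map_neg]; exact neg_mem hy

theorem gri_iff {K : AddSubgroup R} : GRI h𝒜 K ↔ IsGradedRightIdealA 𝒜 K := by
  constructor
  · rintro ⟨hr, hcc⟩
    refine ⟨hr, le_antisymm (fun x hx => mem_closure_of_cc h𝒜 hcc hx) ?_⟩
    exact (AddSubgroup.closure_le _).mpr Set.inter_subset_left
  · rintro ⟨hr, heq⟩
    refine ⟨hr, fun x hx g => ?_⟩
    rw [heq] at hx ⊢
    induction hx using AddSubgroup.closure_induction with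
    | mem y hy =>
      obtain ⟨hyK, hyh⟩ := hy
      obtain ⟨h, hyh⟩ := Set.mem_iUnion.mp hyh
      by_cases hgh : g = h
      · subst hgh; rw [gp_same h𝒜 hyh]; exact AddSubgroup.subset_closure ⟨hyK, Set.mem_iUnion.mpr ⟨g, hyh⟩⟩
      · rw [gp_ne h𝒜 hyh hgh]; exact zero_mem _
    | zero => rw [map_zero]; exact zero_mem _
    | add y z _ _ hy hz => rw [map_add]; exact add_mem hy hz
    | neg y _ hy => rw [map_neg]; exact neg_mem hy

theorem leftIdeal_iff_cc {N : Submodule R R} :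
    IsGradedLeftIdeal 𝒜 N ↔ CC h𝒜 (N : Set R) := by
  constructor
  · intro heq x hx
    rw [IsGradedLeftIdeal] at heq
    rw [heq] at hx
    have key : ∀ g, gp h𝒜 g x ∈ N := by
      induction hx using Submodule.span_induction with
      | mem y hy =>
        obtain ⟨hyN, hyh⟩ := hy
        obtain ⟨h, hyh⟩ := Set.mem_iUnion.mp hyh
        intro g
        by_cases hgh : g = h
        · subst hgh; rw [gp_same h𝒜 hyh]; exact hyN
        · rw [gp_ne h𝒜 hyh hgh]; exact zero_mem _
      | zero => intro g; rw [map_zero]; exact zero_mem _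
      | add y z _ _ hy hz => intro g; rw [map_add]; exact add_mem (hy g) (hz g)
      | smul r y _ hy =>
        intro g
        obtain ⟨s, _, hsum⟩ := gp_support h𝒜 r
        have hdec : r • y = ∑ k ∈ s, gp h𝒜 k r * y := by
          rw [smul_eq_mul, ← Finset.sum_mul, hsum]
        rw [hdec, map_sum]
        refine sum_mem fun k _ => ?_
        rw [gp_mul_left h𝒜 (gp_mem h𝒜 k r) y g]
        exact Submodule.smul_mem _ _ (hy (k⁻¹ * g))
    exact key
  · intro hcc
    refine le_antisymm (fun x hx => ?_) (Submodule.span_le.mpr Set.inter_subset_left)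
    have h1 := mem_closure_of_cc h𝒜 hcc hx
    have h2 : AddSubgroup.closure ((N : Set R) ∩ ⋃ g, (𝒜 g : Set R)) ≤
        (Submodule.span R ((N : Set R) ∩ ⋃ g, (𝒜 g : Set R))).toAddSubgroup := by
      rw [AddSubgroup.closure_le]; exact Submodule.subset_span
    exact h2 h1

theorem exists_min_gri (hart : GrRightArtinian 𝒜) (F : Set (AddSubgroup R))
    (hF : ∀ K ∈ F, GRI h𝒜 K) (hne : F.Nonempty) :
    ∃ K ∈ F, ∀ K' ∈ F, K' ≤ K → K' = K := by
  by_contra hc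
  push_neg at hc
  obtain ⟨K0, hK0⟩ := hne
  choose nxt hmem hle hne' using hc
  let f : ℕ → {K : AddSubgroup R // K ∈ F} :=
    fun n => Nat.rec ⟨K0, hK0⟩ (fun _ p => ⟨nxt p.1 p.2, hmem p.1 p.2⟩) n
  have hstep : ∀ n, (f (n+1)).1 = nxt (f n).1 (f n).2 := fun n => rfl
  have hanti : Antitone fun n => (f n).1 := by
    apply antitone_nat_of_succ_le
    intro n; rw [hstep]; exact hle _ _
  obtain ⟨n, hn⟩ := hart (fun n => (f n).1) (fun n => (gri_iff h𝒜).mp (hF _ (f n).2)) hanti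
  exact hne' (f n).1 (f n).2 (by rw [← hstep n]; exact hn (n+1) (Nat.le_succ n))

def MaxI (h𝒜 : IsGRing 𝒜) (𝔪 : AddSubgroup R) : Prop :=
  GRI h𝒜 𝔪 ∧ (1:R) ∉ 𝔪 ∧ ∀ K, GRI h𝒜 K → 𝔪 < K → (1:R) ∈ K

theorem exists_max_above {N : AddSubgroup R} (hN : GRI h𝒜 N) (h1 : (1:R) ∉ N) :
    ∃ 𝔪, MaxI h𝒜 𝔪 ∧ N ≤ 𝔪 := by
  set S : Set (AddSubgroup R) := {K | GRI h𝒜 K ∧ (1:R) ∉ K ∧ N ≤ K} with hS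
  have hz := zorn_le_nonempty₀ S ?_ N ⟨hN, h1, le_rfl⟩
  · obtain ⟨m, hNm, hm⟩ := hz
    obtain ⟨⟨hmg, hm1, hmN⟩, hmax⟩ := hm
    refine ⟨m, ⟨hmg, hm1, fun K hKg hmK => ?_⟩, hmN⟩
    by_contra hK1
    exact absurd (hmax ⟨hKg, hK1, le_trans hmN hmK.le⟩ hmK.le) (not_le_of_gt hmK)
  · intro c hcS hchain y hy
    have hdir := hchain.directedOn
    have hmem : ∀ {x : R}, x ∈ sSup c ↔ ∃ K ∈ c, x ∈ K := fun {x} =>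
      AddSubgroup.mem_sSup_of_directedOn ⟨y, hy⟩ hdir
    refine ⟨sSup c, ⟨⟨?_, ?_⟩, ?_, ?_⟩, fun z hz => le_sSup hz⟩
    · intro x hx r
      obtain ⟨K, hKc, hxK⟩ := hmem.mp hx
      exact hmem.mpr ⟨K, hKc, (hcS hKc).1.1 x hxK r⟩
    · intro x hx g
      obtain ⟨K, hKc, hxK⟩ := hmem.mp hx
      exact hmem.mpr ⟨K, hKc, (hcS hKc).1.2 x hxK g⟩
    · intro hone
      obtain ⟨K, hKc, hxK⟩ := hmem.mp hone
      exact (hcS hKc).2.1 hxK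
    · exact le_trans (hcS hy).2.2 (le_sSup hy)

def Jr (h𝒜 : IsGRing 𝒜) : AddSubgroup R := sInf {𝔪 | MaxI h𝒜 𝔪}

theorem mem_Jr {x : R} : x ∈ Jr h𝒜 ↔ ∀ 𝔪, MaxI h𝒜 𝔪 → x ∈ 𝔪 := by
  simp [Jr, AddSubgroup.mem_sInf]

theorem Jr_gri : GRI h𝒜 (Jr h𝒜) := by
  constructor
  · intro x hx r
    rw [mem_Jr] at hx ⊢
    exact fun 𝔪 h𝔪 => h𝔪.1.1 x (hx 𝔪 h𝔪) r
  · intro x hx g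
    have hx' : x ∈ Jr h𝒜 := hx
    show gp h𝒜 g x ∈ Jr h𝒜
    rw [mem_Jr] at hx' ⊢
    exact fun 𝔪 h𝔪 => h𝔪.1.2 x (hx' 𝔪 h𝔪) g

theorem gri_bot : GRI h𝒜 (⊥ : AddSubgroup R) := by
  constructor
  · intro x hx r
    rw [AddSubgroup.mem_bot] at hx ⊢
    rw [hx, zero_mul]
  · intro x hx g
    have hx' : x = 0 := by simpa using hx
    show gp h𝒜 g x ∈ (⊥ : AddSubgroup R)
    rw [hx', map_zero]
    exact zero_mem _

theorem exists_maxI (hR1 : (1:R) ≠ 0) : ∃ 𝔪, MaxI h𝒜 𝔪 := by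
  obtain ⟨𝔪, h𝔪, _⟩ := exists_max_above h𝒜 (gri_bot h𝒜) (by simpa using hR1)
  exact ⟨𝔪, h𝔪⟩

theorem one_not_mem_Jr (hR1 : (1:R) ≠ 0) : (1:R) ∉ Jr h𝒜 := by
  obtain ⟨𝔪, h𝔪⟩ := exists_maxI h𝒜 hR1
  intro h
  exact h𝔪.2.1 (mem_Jr h𝒜 |>.mp h 𝔪 h𝔪)

def rI (y : R) : AddSubgroup R := (AddMonoidHom.mulLeft y).range

theorem mem_rI {y x : R} : x ∈ rI y ↔ ∃ r, y * r = x := by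
  simp [rI, AddMonoidHom.mem_range, AddMonoidHom.mulLeft]

theorem self_mem_rI (y : R) : y ∈ rI y := mem_rI.mpr ⟨1, mul_one y⟩

theorem rI_gri {d : G} {y : R} (hy : y ∈ 𝒜 d) : GRI h𝒜 (rI y) := by
  constructor
  · intro x hx r
    obtain ⟨r', hr'⟩ := mem_rI.mp hx
    exact mem_rI.mpr ⟨r' * r, by rw [← hr', mul_assoc]⟩
  · intro x hx g
    obtain ⟨r', hr'⟩ := mem_rI.mp hx
    rw [← hr', gp_mul_left h𝒜 hy]
    exact mem_rI.mpr ⟨_, rfl⟩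

theorem gri_sup {A B : AddSubgroup R} (hA : GRI h𝒜 A) (hB : GRI h𝒜 B) : GRI h𝒜 (A ⊔ B) := by
  constructor
  · intro x hx r
    obtain ⟨a, ha, b, hb, rfl⟩ := AddSubgroup.mem_sup.mp hx
    rw [add_mul]
    exact AddSubgroup.mem_sup.mpr ⟨a * r, hA.1 a ha r, b * r, hB.1 b hb r, rfl⟩
  · intro x hx g
    obtain ⟨a, ha, b, hb, rfl⟩ := AddSubgroup.mem_sup.mp hx
    rw [map_add]
    exact AddSubgroup.mem_sup.mpr ⟨_, hA.2 a ha g, _, hB.2 b hb g, rfl⟩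

/-- From a non-membership, extract a homogeneous non-member inside a CC set. -/
theorem exists_homog_not_mem {K : AddSubgroup R} (hK : CC h𝒜 (K : Set R))
    {N : AddSubgroup R} {y : R} (hyK : y ∈ K) (hyN : y ∉ N) :
    ∃ g, gp h𝒜 g y ∈ K ∧ gp h𝒜 g y ∉ N := by
  by_contra hc
  push_neg at hc
  apply hyN
  obtain ⟨s, _, hsum⟩ := gp_support h𝒜 y
  rw [← hsum]
  exact sum_mem fun g _ => hc g (hK y hyK g)

/-- Key: `{s | u * s ∈ 𝔪}` is a maximal graded right ideal when proper. -/
theorem nmax {𝔪 : AddSubgroup R} (h𝔪 : MaxI h𝒜 𝔪) {d : G} {u : R} (hu : u ∈ 𝒜 d)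
    (hu𝔪 : u ∉ 𝔪) : MaxI h𝒜 ((𝔪.comap (AddMonoidHom.mulLeft u) : AddSubgroup R)) := by
  set Nu := 𝔪.comap (AddMonoidHom.mulLeft u) with hNu
  have hmemNu : ∀ {s : R}, s ∈ Nu ↔ u * s ∈ 𝔪 := fun {s} => Iff.rfl
  have hNug : GRI h𝒜 Nu := by
    constructor
    · intro x hx r
      rw [hmemNu] at hx ⊢
      rw [← mul_assoc]
      exact h𝔪.1.1 _ hx r
    · intro x hx g
      have hx' : u * x ∈ 𝔪 := hx
      show gp h𝒜 g x ∈ Nu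
      rw [hmemNu]
      have heq : u * gp h𝒜 g x = gp h𝒜 (d * g) (u * x) := by
        rw [gp_mul_left h𝒜 hu, inv_mul_cancel_left]
      rw [heq]
      exact h𝔪.1.2 _ hx' _
  refine ⟨hNug, ?_, ?_⟩
  · intro h1
    exact hu𝔪 (by simpa using hmemNu.mp h1)
  · intro K hK hNuK
    obtain ⟨y, hyK, hyNu⟩ := SetLike.exists_of_lt hNuK
    obtain ⟨g, hkK, hkNu⟩ := exists_homog_not_mem h𝒜 hK.2 hyK hyNu
    set k := gp h𝒜 g y with hk
    have hkh : k ∈ 𝒜 g := gp_mem h𝒜 g y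
    have huk : u * k ∉ 𝔪 := fun h => hkNu (hmemNu.mpr h)
    have hukh : u * k ∈ 𝒜 (d * g) := h𝒜.2.1 _ _ _ _ hu hkh
    have hM' : GRI h𝒜 (𝔪 ⊔ rI (u * k)) := gri_sup h𝒜 h𝔪.1 (rI_gri h𝒜 hukh)
    have hlt : 𝔪 < 𝔪 ⊔ rI (u * k) := by
      refine lt_of_le_of_ne le_sup_left fun heq => ?_
      exact huk (heq ▸ (le_sup_right : rI (u*k) ≤ 𝔪 ⊔ rI (u*k)) (self_mem_rI (u*k)))
    obtain ⟨w, hw, z, hz, hwz⟩ := AddSubgroup.mem_sup.mp (h𝔪.2.2 _ hM' hlt)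
    obtain ⟨s, hs⟩ := mem_rI.mp hz
    have h1 : u * k * s = 1 - w := by
      rw [hs, eq_sub_iff_add_eq, add_comm]; exact hwz
    have hx1 : u * (1 - k * (s * u)) ∈ 𝔪 := by
      have heq2 : u * (1 - k * (s * u)) = u - (u * k * s) * u := by noncomm_ring
      have heq3 : u * (1 - k * (s * u)) = w * u := by
        rw [heq2, h1]; noncomm_ring
      rw [heq3]
      exact h𝔪.1.1 w hw u
    have h1K : (1:R) = (1 - k * (s * u)) + k * (s * u) := by noncomm_ring
    rw [h1K]
    exact add_mem (hNuK.le (hmemNu.mpr hx1)) (hK.1 k hkK (s * u))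

theorem Jr_mul_left {x : R} (hx : x ∈ Jr h𝒜) (r : R) : r * x ∈ Jr h𝒜 := by
  obtain ⟨s, _, hsum⟩ := gp_support h𝒜 r
  have : r * x = ∑ k ∈ s, gp h𝒜 k r * x := by rw [← Finset.sum_mul, hsum]
  rw [this]
  refine sum_mem fun k _ => ?_
  rw [mem_Jr]
  intro 𝔪 h𝔪
  by_cases hu : gp h𝒜 k r ∈ 𝔪
  · exact h𝔪.1.1 _ hu x
  · have := nmax h𝒜 h𝔪 (gp_mem h𝒜 k r) hu
    exact (mem_Jr h𝒜 |>.mp hx) _ this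

def prodSG (A B : AddSubgroup R) : AddSubgroup R :=
  AddSubgroup.closure {x | ∃ a ∈ A, ∃ b ∈ B, x = a * b}

theorem mul_mem_prodSG {A B : AddSubgroup R} {a b : R} (ha : a ∈ A) (hb : b ∈ B) :
    a * b ∈ prodSG A B :=
  AddSubgroup.subset_closure ⟨a, ha, b, hb, rfl⟩

theorem prodSG_le {A B : AddSubgroup R} {C : AddSubgroup R}
    (h : ∀ a ∈ A, ∀ b ∈ B, a * b ∈ C) : prodSG A B ≤ C := by
  rw [prodSG, AddSubgroup.closure_le]
  rintro x ⟨a, ha, b, hb, rfl⟩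
  exact h a ha b hb

theorem prodSG_mono {A A' B B' : AddSubgroup R} (hA : A ≤ A') (hB : B ≤ B') :
    prodSG A B ≤ prodSG A' B' :=
  prodSG_le fun a ha b hb => mul_mem_prodSG (hA ha) (hB hb)

theorem prodSG_mul_right {A B : AddSubgroup R} (hB : ∀ b ∈ B, ∀ r : R, b * r ∈ B) :
    ∀ x ∈ prodSG A B, ∀ r : R, x * r ∈ prodSG A B := by
  intro x hx
  induction hx using AddSubgroup.closure_induction with
  | mem y hy =>
    obtain ⟨a, ha, b, hb, rfl⟩ := hy
    intro r
    rw [mul_assoc]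
    exact mul_mem_prodSG ha (hB b hb r)
  | zero => intro r; rw [zero_mul]; exact zero_mem _
  | add y z _ _ hy hz => intro r; rw [add_mul]; exact add_mem (hy r) (hz r)
  | neg y _ hy => intro r; rw [neg_mul]; exact neg_mem (hy r)

theorem prodSG_mul_left {A B : AddSubgroup R} (hA : ∀ a ∈ A, ∀ r : R, r * a ∈ A) :
    ∀ x ∈ prodSG A B, ∀ r : R, r * x ∈ prodSG A B := by
  intro x hx
  induction hx using AddSubgroup.closure_induction with
  | mem y hy =>
    obtain ⟨a, ha, b, hb, rfl⟩ := hy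
    intro r
    rw [← mul_assoc]
    exact mul_mem_prodSG (hA a ha r) hb
  | zero => intro r; rw [mul_zero]; exact zero_mem _
  | add y z _ _ hy hz => intro r; rw [mul_add]; exact add_mem (hy r) (hz r)
  | neg y _ hy => intro r; rw [mul_neg]; exact neg_mem (hy r)

theorem prodSG_cc {A B : AddSubgroup R} (hA : CC h𝒜 (A : Set R)) (hB : CC h𝒜 (B : Set R)) :
    CC h𝒜 ((prodSG A B : AddSubgroup R) : Set R) := by
  intro x hx
  induction hx using AddSubgroup.closure_induction with
  | mem y hy =>
    obtain ⟨a, ha, b, hb, rfl⟩ := hy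
    intro g
    obtain ⟨s, _, hsum⟩ := gp_support h𝒜 a
    have hab : a * b = ∑ k ∈ s, gp h𝒜 k a * b := by rw [← Finset.sum_mul, hsum]
    show gp h𝒜 g (a * b) ∈ prodSG A B
    rw [hab, map_sum]
    refine sum_mem fun k _ => ?_
    rw [gp_mul_left h𝒜 (gp_mem h𝒜 k a) b g]
    exact mul_mem_prodSG (hA a ha k) (hB b hb _)
  | zero => intro g; show gp h𝒜 g 0 ∈ prodSG A B; rw [map_zero]; exact zero_mem _
  | add y z _ _ hy hz =>
    intro g
    show gp h𝒜 g (y + z) ∈ prodSG A B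
    rw [map_add]
    exact add_mem (hy g) (hz g)
  | neg y _ hy =>
    intro g
    show gp h𝒜 g (-y) ∈ prodSG A B
    rw [map_neg]
    exact neg_mem (hy g)

theorem prodSG_assoc (A B C : AddSubgroup R) :
    prodSG (prodSG A B) C = prodSG A (prodSG B C) := by
  refine le_antisymm (prodSG_le fun x hx c hc => ?_) (prodSG_le fun a ha y hy => ?_)
  · induction hx using AddSubgroup.closure_induction with
    | mem y hy =>
      obtain ⟨a, ha, b, hb, rfl⟩ := hy
      rw [mul_assoc]
      exact mul_mem_prodSG ha (mul_mem_prodSG hb hc)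
    | zero => rw [zero_mul]; exact zero_mem _
    | add y z _ _ hy hz => rw [add_mul]; exact add_mem hy hz
    | neg y _ hy => rw [neg_mul]; exact neg_mem hy
  · induction hy using AddSubgroup.closure_induction with
    | mem y hy' =>
      obtain ⟨b, hb, c, hc, rfl⟩ := hy'
      rw [← mul_assoc]
      exact mul_mem_prodSG (mul_mem_prodSG ha hb) hc
    | zero => rw [mul_zero]; exact zero_mem _
    | add y z _ _ hy hz => rw [mul_add]; exact add_mem hy hz
    | neg y _ hy => rw [mul_neg]; exact neg_mem hy

def Ppow (h𝒜 : IsGRing 𝒜) : ℕ → AddSubgroup R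
  | 0 => Jr h𝒜
  | (k+1) => prodSG (Ppow h𝒜 k) (Jr h𝒜)

theorem Ppow_gri (k : ℕ) : GRI h𝒜 (Ppow h𝒜 k) := by
  induction k with
  | zero => exact Jr_gri h𝒜
  | succ k ih =>
    exact ⟨prodSG_mul_right (Jr_gri h𝒜).1, prodSG_cc h𝒜 ih.2 (Jr_gri h𝒜).2⟩

theorem Ppow_succ_le (k : ℕ) : Ppow h𝒜 (k+1) ≤ Ppow h𝒜 k :=
  prodSG_le fun p hp j _ => (Ppow_gri h𝒜 k).1 p hp j

theorem Ppow_antitone : Antitone (Ppow h𝒜) :=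
  antitone_nat_of_succ_le (Ppow_succ_le h𝒜)

theorem Ppow_le_Jr (k : ℕ) : Ppow h𝒜 k ≤ Jr h𝒜 := Ppow_antitone h𝒜 (Nat.zero_le k)

theorem Ppow_add (a b : ℕ) : prodSG (Ppow h𝒜 a) (Ppow h𝒜 b) = Ppow h𝒜 (a + b + 1) := by
  induction b with
  | zero => rfl
  | succ b ih =>
    show prodSG (Ppow h𝒜 a) (prodSG (Ppow h𝒜 b) (Jr h𝒜)) = _
    rw [← prodSG_assoc, ih]
    rfl

theorem pow_mem_Ppow {z : R} (hz : z ∈ Jr h𝒜) (k : ℕ) : z ^ (k+1) ∈ Ppow h𝒜 k := by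
  induction k with
  | zero => rw [pow_one]; exact hz
  | succ k ih =>
    rw [pow_succ]
    exact mul_mem_prodSG ih hz

theorem gri_top : GRI h𝒜 (⊤ : AddSubgroup R) :=
  ⟨fun _ _ _ => trivial, fun _ _ _ => trivial⟩

theorem Ppow_eq_bot (hart : GrRightArtinian 𝒜) (hR1 : (1:R) ≠ 0) :
    ∃ n, Ppow h𝒜 n = ⊥ := by
  obtain ⟨n, hn⟩ := hart (Ppow h𝒜) (fun k => (gri_iff h𝒜).mp (Ppow_gri h𝒜 k))
    (Ppow_antitone h𝒜)
  refine ⟨n, ?_⟩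
  by_contra hTne
  set T := Ppow h𝒜 n with hT
  have hTT : T ≤ prodSG T T := by
    have h1 : Ppow h𝒜 (n + n + 1) ≤ prodSG T T := (Ppow_add h𝒜 n n).ge
    have h2 : T = Ppow h𝒜 (n + n + 1) := (hn (n + n + 1) (by omega)).symm
    exact h2.le.trans h1
  obtain ⟨t0, ht0T, ht0⟩ : ∃ t0 ∈ T, t0 ≠ (0:R) := by
    by_contra hc
    push_neg at hc
    exact hTne (le_antisymm (fun x hx => AddSubgroup.mem_bot.mpr (hc x hx)) bot_le)
  set F : Set (AddSubgroup R) :=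
    {A | GRI h𝒜 A ∧ ∃ a ∈ A, ∃ t ∈ T, a * t ≠ 0} with hF
  have hFtop : (⊤ : AddSubgroup R) ∈ F :=
    ⟨gri_top h𝒜, 1, trivial, t0, ht0T, by rwa [one_mul]⟩
  obtain ⟨A, hAF, hAmin⟩ := exists_min_gri h𝒜 hart F (fun K hK => hK.1) ⟨⊤, hFtop⟩
  obtain ⟨hAg, a', ha', t, htT, hat⟩ := hAF
  obtain ⟨g, haA, hgne⟩ : ∃ g, gp h𝒜 g a' ∈ A ∧ gp h𝒜 g a' * t ≠ 0 := by
    by_contra hc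
    push_neg at hc
    apply hat
    obtain ⟨s, _, hsum⟩ := gp_support h𝒜 a'
    have : a' * t = ∑ k ∈ s, gp h𝒜 k a' * t := by rw [← Finset.sum_mul, hsum]
    rw [this]
    exact Finset.sum_eq_zero fun k _ => hc k (hAg.2 a' ha' k)
  set a := gp h𝒜 g a' with ha
  have hah : a ∈ 𝒜 g := gp_mem h𝒜 g a'
  have hane : a ≠ 0 := fun h => hgne (by rw [h, zero_mul])
  set aT := AddSubgroup.map (AddMonoidHom.mulLeft a) T with haT
  have hmem_aT : ∀ {x : R}, x ∈ aT ↔ ∃ t' ∈ T, a * t' = x := by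
    intro x
    simp [haT, AddSubgroup.mem_map, AddMonoidHom.mulLeft]
  have haTg : GRI h𝒜 aT := by
    constructor
    · intro x hx r
      obtain ⟨t', ht', rfl⟩ := hmem_aT.mp hx
      rw [mul_assoc]
      exact hmem_aT.mpr ⟨t' * r, (Ppow_gri h𝒜 n).1 t' ht' r, rfl⟩
    · intro x hx g'
      obtain ⟨t', ht', rfl⟩ := hmem_aT.mp hx
      show gp h𝒜 g' (a * t') ∈ aT
      rw [gp_mul_left h𝒜 hah]
      exact hmem_aT.mpr ⟨_, (Ppow_gri h𝒜 n).2 t' ht' _, rfl⟩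
  have haTA : aT ≤ A := by
    intro x hx
    obtain ⟨t', ht', rfl⟩ := hmem_aT.mp hx
    exact hAg.1 a haA t'
  have haTF : aT ∈ F := by
    refine ⟨haTg, ?_⟩
    obtain ⟨t1, ht1, t2, ht2, h12⟩ : ∃ t1 ∈ T, ∃ t2 ∈ T, a * (t1 * t2) ≠ 0 := by
      by_contra hc
      push_neg at hc
      apply hgne
      have hker : prodSG T T ≤ (AddMonoidHom.mulLeft a).ker :=
        prodSG_le fun t1 ht1 t2 ht2 => hc t1 ht1 t2 ht2
      have := hker (hTT htT)
      simpa [AddMonoidHom.mem_ker, AddMonoidHom.mulLeft] using this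
    exact ⟨a * t1, hmem_aT.mpr ⟨t1, ht1, rfl⟩, t2, ht2, by rwa [mul_assoc]⟩
  have haTA' : aT = A := hAmin aT haTF haTA
  have haaT : a ∈ aT := haTA' ▸ haA
  obtain ⟨t', ht'T, ht'⟩ := hmem_aT.mp haaT
  set Na := (AddMonoidHom.mulLeft a).ker with hNa
  have hmem_Na : ∀ {x : R}, x ∈ Na ↔ a * x = 0 := by
    intro x; simp [hNa, AddMonoidHom.mem_ker, AddMonoidHom.mulLeft]
  have hNag : GRI h𝒜 Na := by
    constructor
    · intro x hx r
      rw [hmem_Na] at hx ⊢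
      rw [← mul_assoc, hx, zero_mul]
    · intro x hx g'
      have hx' : a * x = 0 := hx
      show gp h𝒜 g' x ∈ Na
      rw [hmem_Na]
      have : a * gp h𝒜 g' x = gp h𝒜 (g * g') (a * x) := by
        rw [gp_mul_left h𝒜 hah, inv_mul_cancel_left]
      rw [this, hx', map_zero]
  have h1Na : (1:R) ∉ Na := by
    rw [hmem_Na, mul_one]
    exact hane
  obtain ⟨𝔪, h𝔪, hNa𝔪⟩ := exists_max_above h𝒜 hNag h1Na
  have ht'𝔪 : t' ∈ 𝔪 := by
    have h1 : t' ∈ Jr h𝒜 := Ppow_le_Jr h𝒜 n ht'T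
    exact (mem_Jr h𝒜 |>.mp h1) 𝔪 h𝔪
  have hsub : (1:R) - t' ∈ Na := by
    rw [hmem_Na, mul_sub, mul_one, ht', sub_self]
  have : (1:R) ∈ 𝔪 := by
    have := add_mem (hNa𝔪 hsub) ht'𝔪
    rwa [sub_add_cancel] at this
  exact h𝔪.2.1 this

theorem Jr_le_max {𝔪 : AddSubgroup R} (h𝔪 : MaxI h𝒜 𝔪) : Jr h𝒜 ≤ 𝔪 :=
  fun _ hx => (mem_Jr h𝒜 |>.mp hx) 𝔪 h𝔪

theorem nil_sq_le_Jr {K : AddSubgroup R} (hK : GRI h𝒜 K) (hKK : prodSG K K ≤ Jr h𝒜) :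
    K ≤ Jr h𝒜 := by
  intro x hx
  rw [mem_Jr]
  intro 𝔪 h𝔪
  by_contra hx𝔪
  have hlt : 𝔪 < 𝔪 ⊔ K := by
    refine lt_of_le_of_ne le_sup_left fun heq => ?_
    exact hx𝔪 (heq ▸ (le_sup_right : K ≤ 𝔪 ⊔ K) hx)
  have h1 := h𝔪.2.2 _ (gri_sup h𝒜 h𝔪.1 hK) hlt
  obtain ⟨w, hw, z, hz, hwz⟩ := AddSubgroup.mem_sup.mp h1
  have hzz : z * z ∈ 𝔪 := Jr_le_max h𝒜 h𝔪 (hKK (mul_mem_prodSG hz hz))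
  have hkey : (1:R) = z * z + w * (1 + z) := by
    have h2 : z * z + w * (1 + z) = w + (w + z) * z := by noncomm_ring
    rw [h2, hwz, one_mul]
    exact hwz.symm
  have : (1:R) ∈ 𝔪 := by
    rw [hkey]
    exact add_mem hzz (h𝔪.1.1 w hw (1 + z))
  exact h𝔪.2.1 this

def Atom (h𝒜 : IsGRing 𝒜) (K : AddSubgroup R) : Prop :=
  GRI h𝒜 K ∧ Jr h𝒜 < K ∧
    ∀ K', GRI h𝒜 K' → Jr h𝒜 ≤ K' → K' ≤ K → K' = Jr h𝒜 ∨ K' = K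

theorem exists_atom_le (hart : GrRightArtinian 𝒜) {W : AddSubgroup R} (hW : GRI h𝒜 W)
    (hWJ : ¬ W ≤ Jr h𝒜) : ∃ K, Atom h𝒜 K ∧ K ≤ W ⊔ Jr h𝒜 := by
  set F : Set (AddSubgroup R) := {K | GRI h𝒜 K ∧ Jr h𝒜 < K ∧ K ≤ W ⊔ Jr h𝒜} with hF
  have hFne : W ⊔ Jr h𝒜 ∈ F := by
    refine ⟨gri_sup h𝒜 hW (Jr_gri h𝒜), ?_, le_rfl⟩
    refine lt_of_le_of_ne le_sup_right fun heq => ?_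
    exact hWJ (le_trans (le_sup_left : W ≤ W ⊔ Jr h𝒜) heq.symm.le)
  obtain ⟨K, hKF, hKmin⟩ := exists_min_gri h𝒜 hart F (fun K hK => hK.1) ⟨_, hFne⟩
  refine ⟨K, ⟨hKF.1, hKF.2.1, fun K' hK' hJK' hK'K => ?_⟩, hKF.2.2⟩
  by_cases hJ : K' = Jr h𝒜
  · exact Or.inl hJ
  · refine Or.inr (hKmin K' ⟨hK', lt_of_le_of_ne hJK' (Ne.symm hJ), le_trans hK'K hKF.2.2⟩ hK'K)

theorem lift_idem (hR1 : (1:R) ≠ 0) :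
    ∀ (m : ℕ) (e : R), e ∈ 𝒜 1 → e * e - e ∈ Jr h𝒜 → (e * e - e) ^ m = 0 →
    ∃ ee : R, ee * ee = ee ∧ ee ∈ 𝒜 1 ∧ ee - e ∈ Jr h𝒜 ∧ (∀ y : R, y * e = 0 → y * ee = 0) := by
  intro m
  induction m using Nat.strong_induction_on with
  | _ m ih =>
    intro e he hwJ hwm
    match m, hwm with
    | 0, hwm =>
      exact absurd (by simpa using hwm) hR1
    | 1, hwm =>
      rw [pow_one, sub_eq_zero] at hwm
      exact ⟨e, hwm, he, by rw [sub_self]; exact zero_mem _, fun y hy => hy⟩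
    | (m+2), hwm =>
      set w := e * e - e with hw
      set e' := (e*e + e*e + e*e) - (e*e*e + e*e*e) with he'
      set u := (e*e + e*e + e*e + e*e) - (e + e + e + e) - (1 + 1 + 1) with hu
      have hee : e * e ∈ 𝒜 1 := by
        have := h𝒜.2.1 1 1 e e he he
        rwa [one_mul] at this
      have heee : e * e * e ∈ 𝒜 1 := by
        have := h𝒜.2.1 1 1 (e*e) e hee he
        rwa [one_mul] at this
      have he'h : e' ∈ 𝒜 1 := by
        rw [he']
        exact sub_mem (add_mem (add_mem hee hee) hee) (add_mem heee heee)
      have hce : Commute w e := by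
        rw [hw]
        exact ((Commute.refl e).mul_left (Commute.refl e)).sub_left (Commute.refl e)
      have hcu : Commute w u := by
        rw [hu]
        have hwe := hce
        have hwee : Commute w (e*e) := hwe.mul_right hwe
        exact (((hwee.add_right hwee).add_right hwee).add_right hwee).sub_right
          (((hwe.add_right hwe).add_right hwe).add_right hwe) |>.sub_right
          (((Commute.one_right w).add_right (Commute.one_right w)).add_right
            (Commute.one_right w))
      have hid : e' * e' - e' = (w * w) * u := by
        rw [he', hw, hu]; noncomm_ring
      have hw'J : e' * e' - e' ∈ Jr h𝒜 := by
        rw [hid, mul_assoc]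
        exact (Jr_gri h𝒜).1 _ hwJ _
      have hw'pow : (e' * e' - e') ^ (m+1) = 0 := by
        rw [hid]
        have hcc : Commute (w * w) u := hcu.mul_left hcu
        rw [hcc.mul_pow]
        have : (w * w) ^ (m+1) = w ^ (m + 2) * w ^ m := by
          rw [← sq, ← pow_mul]
          rw [← pow_add]
          congr 1
          omega
        rw [this, hwm, zero_mul, zero_mul]
      obtain ⟨ee, hee1, hee2, hee3, hee4⟩ := ih (m+1) (by omega) e' he'h hw'J hw'pow
      refine ⟨ee, hee1, hee2, ?_, fun y hy => ?_⟩
      · have heq : e' - e = w * (1 - (e + e)) := by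
          rw [he', hw]; noncomm_ring
        have h1 : e' - e ∈ Jr h𝒜 := heq ▸ (Jr_gri h𝒜).1 _ hwJ _
        have : ee - e = (ee - e') + (e' - e) := by abel
        rw [this]
        exact add_mem hee3 h1
      · refine hee4 y ?_
        have heq : y * e' = (y * e) * ((e + e + e) - (e*e + e*e)) := by
          rw [he']; noncomm_ring
        rw [heq, hy, zero_mul]

theorem exists_homog_mem_not_mem {S : Set R} (hS : CC h𝒜 S) {N : AddSubgroup R} {y : R}
    (hy : y ∈ S) (hyN : y ∉ N) : ∃ g, gp h𝒜 g y ∈ S ∧ gp h𝒜 g y ∉ N := by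
  by_contra hc
  push_neg at hc
  apply hyN
  obtain ⟨s, _, hsum⟩ := gp_support h𝒜 y
  rw [← hsum]
  exact sum_mem fun g _ => hc g (hS y hy g)

theorem map_mulLeft_gri {g : G} {a : R} (hah : a ∈ 𝒜 g) {K : AddSubgroup R} (hK : GRI h𝒜 K) :
    GRI h𝒜 (AddSubgroup.map (AddMonoidHom.mulLeft a) K) := by
  have hmem : ∀ {x : R}, x ∈ AddSubgroup.map (AddMonoidHom.mulLeft a) K ↔
      ∃ k ∈ K, a * k = x := by
    intro x; simp [AddSubgroup.mem_map, AddMonoidHom.mulLeft]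
  constructor
  · intro x hx r
    obtain ⟨k, hk, rfl⟩ := hmem.mp hx
    rw [mul_assoc]
    exact hmem.mpr ⟨k * r, hK.1 k hk r, rfl⟩
  · intro x hx g'
    obtain ⟨k, hk, rfl⟩ := hmem.mp hx
    show gp h𝒜 g' (a * k) ∈ _
    rw [gp_mul_left h𝒜 hah]
    exact hmem.mpr ⟨_, hK.2 k hk _, rfl⟩

theorem atom_idem (hart : GrRightArtinian 𝒜) (hR1 : (1:R) ≠ 0) {K : AddSubgroup R}
    (hK : Atom h𝒜 K) :
    ∃ e : R, e * e = e ∧ e ∈ 𝒜 1 ∧ e ∉ Jr h𝒜 ∧ e ∈ K ∧ K = rI e ⊔ Jr h𝒜 := by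
  classical
  -- K*K is not inside Jr
  have hKK : ¬ prodSG K K ≤ Jr h𝒜 := by
    intro h
    exact absurd (nil_sq_le_Jr h𝒜 hK.1 h) (not_le_of_gt hK.2.1)
  obtain ⟨x, hxK, y, hyK, hxy⟩ : ∃ x ∈ K, ∃ y ∈ K, x * y ∉ Jr h𝒜 := by
    by_contra hc
    push_neg at hc
    exact hKK (prodSG_le hc)
  obtain ⟨g, haK, hay⟩ : ∃ g, gp h𝒜 g x ∈ K ∧ gp h𝒜 g x * y ∉ Jr h𝒜 := by
    by_contra hc
    push_neg at hc
    apply hxy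
    obtain ⟨s, _, hsum⟩ := gp_support h𝒜 x
    have : x * y = ∑ k ∈ s, gp h𝒜 k x * y := by rw [← Finset.sum_mul, hsum]
    rw [this]
    exact sum_mem fun k _ => hc k (hK.1.2 x hxK k)
  set a := gp h𝒜 g x with ha
  have hah : a ∈ 𝒜 g := gp_mem h𝒜 g x
  -- B = a*K + Jr is an in-between graded right ideal, not Jr, so equals K
  set aK := AddSubgroup.map (AddMonoidHom.mulLeft a) K with haK'
  have hmem_aK : ∀ {z : R}, z ∈ aK ↔ ∃ k ∈ K, a * k = z := by
    intro z; simp [haK', AddSubgroup.mem_map, AddMonoidHom.mulLeft]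
  have hBK : aK ⊔ Jr h𝒜 ≤ K := by
    refine sup_le ?_ hK.2.1.le
    intro z hz
    obtain ⟨k, hk, rfl⟩ := hmem_aK.mp hz
    exact hK.1.1 a haK k
  have hBeqK : aK ⊔ Jr h𝒜 = K := by
    rcases hK.2.2 _ (gri_sup h𝒜 (map_mulLeft_gri h𝒜 hah hK.1) (Jr_gri h𝒜))
      le_sup_right hBK with h | h
    · exfalso
      apply hay
      have : a * y ∈ aK ⊔ Jr h𝒜 := AddSubgroup.mem_sup_left (hmem_aK.mpr ⟨y, hyK, rfl⟩)
      rw [h] at this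
      exact this
    · exact h
  -- write a = a*t + j
  obtain ⟨z, hzaK, j, hjJ, hzj⟩ := AddSubgroup.mem_sup.mp (hBeqK ▸ haK : a ∈ aK ⊔ Jr h𝒜)
  obtain ⟨t, htK, rfl⟩ := hmem_aK.mp hzaK
  set e := gp h𝒜 1 t with he
  have heh : e ∈ 𝒜 1 := gp_mem h𝒜 1 t
  have heK : e ∈ K := hK.1.2 t htK 1
  -- a - a*e ∈ Jr
  have hae : a - a * e ∈ Jr h𝒜 := by
    have h1 : gp h𝒜 g a = a := gp_same h𝒜 hah
    have h2 : gp h𝒜 g (a * t) = a * e := by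
      rw [gp_mul_left h𝒜 hah, inv_mul_cancel]
    have h3 : a = a * e + gp h𝒜 g j := by
      conv_lhs => rw [← h1, ← hzj]
      rw [map_add, h2]
    have h4 : gp h𝒜 g j ∈ Jr h𝒜 := (Jr_gri h𝒜).2 j hjJ g
    have heq : a - a * e = gp h𝒜 g j := by
      nth_rewrite 1 [h3]
      abel
    rw [heq]; exact h4
  -- W = {s ∈ K | a*s ∈ Jr} equals Jr by atomicity
  set W := K ⊓ (Jr h𝒜).comap (AddMonoidHom.mulLeft a) with hW
  have hmemW : ∀ {s : R}, s ∈ W ↔ s ∈ K ∧ a * s ∈ Jr h𝒜 := fun {s} => AddSubgroup.mem_inf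
  have hWg : GRI h𝒜 W := by
    constructor
    · intro s hs r
      obtain ⟨hs1, hs2⟩ := hmemW.mp hs
      exact hmemW.mpr ⟨hK.1.1 s hs1 r, by rw [← mul_assoc]; exact (Jr_gri h𝒜).1 _ hs2 r⟩
    · intro s hs g'
      obtain ⟨hs1, hs2⟩ := hmemW.mp hs
      show gp h𝒜 g' s ∈ W
      refine hmemW.mpr ⟨hK.1.2 s hs1 g', ?_⟩
      have : a * gp h𝒜 g' s = gp h𝒜 (g * g') (a * s) := by
        rw [gp_mul_left h𝒜 hah, inv_mul_cancel_left]
      rw [this]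
      exact (Jr_gri h𝒜).2 _ hs2 _
  have hJW : Jr h𝒜 ≤ W := by
    intro s hs
    exact hmemW.mpr ⟨hK.2.1.le hs, Jr_mul_left h𝒜 hs a⟩
  have hWK : W ≤ K := inf_le_left
  have hWJr : W = Jr h𝒜 := by
    rcases hK.2.2 W hWg hJW hWK with h | h
    · exact h
    · exfalso
      apply hay
      have : y ∈ W := h ▸ hyK
      exact (hmemW.mp this).2
  -- e*e - e ∈ Jr
  have heeJ : e * e - e ∈ Jr h𝒜 := by
    rw [← hWJr]
    refine hmemW.mpr ⟨sub_mem (hK.1.1 e heK e) heK, ?_⟩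
    have hcalc : a * (e * e - e) = -((a - a * e) * e) := by noncomm_ring
    rw [hcalc]
    exact neg_mem ((Jr_gri h𝒜).1 _ hae e)
  -- e ∉ Jr
  have heJ : e ∉ Jr h𝒜 := by
    intro hcon
    apply hay
    have h1 : a * e ∈ Jr h𝒜 := Jr_mul_left h𝒜 hcon a
    have h2 : a ∈ Jr h𝒜 := by
      have : a = (a - a * e) + a * e := by abel
      rw [this]; exact add_mem hae h1
    exact (Jr_gri h𝒜).1 a h2 y
  -- lift to a true idempotent
  obtain ⟨n, hn⟩ := Ppow_eq_bot h𝒜 hart hR1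
  have hwpow : (e * e - e) ^ (n + 1) = 0 := by
    have := pow_mem_Ppow h𝒜 heeJ n
    rw [hn] at this
    simpa using this
  obtain ⟨f, hf1, hf2, hf3, _⟩ := lift_idem h𝒜 hR1 (n+1) e heh heeJ hwpow
  have hfJ : f ∉ Jr h𝒜 := by
    intro hcon
    apply heJ
    have : e = f - (f - e) := by abel
    rw [this]
    exact sub_mem hcon hf3
  have hfK : f ∈ K := by
    have : f = e + (f - e) := by abel
    rw [this]
    exact add_mem heK (hK.2.1.le hf3)
  refine ⟨f, hf1, hf2, hfJ, hfK, ?_⟩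
  have hle : rI f ⊔ Jr h𝒜 ≤ K := by
    refine sup_le ?_ hK.2.1.le
    intro z hz
    obtain ⟨r, rfl⟩ := mem_rI.mp hz
    exact hK.1.1 f hfK r
  rcases hK.2.2 _ (gri_sup h𝒜 (rI_gri h𝒜 hf2) (Jr_gri h𝒜)) le_sup_right hle with h | h
  · exfalso
    apply hfJ
    have : f ∈ rI f ⊔ Jr h𝒜 := AddSubgroup.mem_sup_left (self_mem_rI f)
    rw [h] at this
    exact this
  · exact h.symm

theorem rinv {K : AddSubgroup R} (hK : Atom h𝒜 K) {e : R} (he : e * e = e) (heh : e ∈ 𝒜 1)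
    (hKe : K = rI e ⊔ Jr h𝒜) {d : G} {x : R} (hx : x ∈ 𝒜 d) (hex : e * x = x)
    (hxe : x * e = x) (hxJ : x ∉ Jr h𝒜) :
    ∃ v : R, v ∈ 𝒜 d⁻¹ ∧ e * v = v ∧ v * e = v ∧ x * v - e ∈ Jr h𝒜 := by
  have hBle : rI x ⊔ Jr h𝒜 ≤ K := by
    refine sup_le ?_ hK.2.1.le
    intro z hz
    obtain ⟨r, rfl⟩ := mem_rI.mp hz
    rw [← hex, mul_assoc]
    rw [hKe]
    exact AddSubgroup.mem_sup_left (mem_rI.mpr ⟨x * r, rfl⟩)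
  have hBeq : rI x ⊔ Jr h𝒜 = K := by
    rcases hK.2.2 _ (gri_sup h𝒜 (rI_gri h𝒜 hx) (Jr_gri h𝒜)) le_sup_right hBle with h | h
    · exfalso
      apply hxJ
      have : x ∈ rI x ⊔ Jr h𝒜 := AddSubgroup.mem_sup_left (self_mem_rI x)
      rw [h] at this
      exact this
    · exact h
  have heK : e ∈ K := by
    rw [hKe]
    exact AddSubgroup.mem_sup_left (self_mem_rI e)
  obtain ⟨z, hzB, j, hjJ, hzj⟩ := AddSubgroup.mem_sup.mp (hBeq ▸ heK : e ∈ rI x ⊔ Jr h𝒜)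
  obtain ⟨s, rfl⟩ := mem_rI.mp hzB
  -- x * s = e - j  (as z = x * s)
  set v0 := e * (s * e) with hv0
  have hxv0 : x * v0 - e = -(j * e) := by
    have h1 : x * v0 = (x * s) * e := by
      rw [hv0, ← mul_assoc, ← mul_assoc, hxe]
    have h2 : x * s = e - j := by
      have := hzj
      -- this : x * s + j = e
      rw [eq_sub_iff_add_eq]
      exact this
    rw [h1, h2, sub_mul, he]
    abel
  have hv0J : x * v0 - e ∈ Jr h𝒜 := by
    rw [hxv0]
    exact neg_mem ((Jr_gri h𝒜).1 _ hjJ e)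
  have hev0 : e * v0 = v0 := by rw [hv0, ← mul_assoc, he]
  have hv0e : v0 * e = v0 := by rw [hv0, mul_assoc, mul_assoc, he, ← mul_assoc]
  set v := gp h𝒜 d⁻¹ v0 with hv
  have hvh : v ∈ 𝒜 d⁻¹ := gp_mem h𝒜 d⁻¹ v0
  have hev : e * v = v := by
    have h1 : gp h𝒜 d⁻¹ (e * v0) = e * gp h𝒜 (1⁻¹ * d⁻¹) v0 := gp_mul_left h𝒜 heh v0 d⁻¹
    rw [hev0, inv_one, one_mul] at h1
    rw [hv]
    exact h1.symm
  have hve : v * e = v := by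
    have h1 : gp h𝒜 d⁻¹ (v0 * e) = gp h𝒜 (d⁻¹ * 1⁻¹) v0 * e := gp_mul_right h𝒜 heh v0 d⁻¹
    rw [hv0e, inv_one, mul_one] at h1
    rw [hv]
    exact h1.symm
  refine ⟨v, hvh, hev, hve, ?_⟩
  have hkey : gp h𝒜 1 (x * v0 - e) = x * v - e := by
    rw [map_sub, gp_mul_left h𝒜 hx, gp_same h𝒜 heh, mul_one]
  rw [← hkey]
  exact (Jr_gri h𝒜).2 _ hv0J 1

theorem linv {K : AddSubgroup R} (hK : Atom h𝒜 K) {e : R} (he : e * e = e) (heh : e ∈ 𝒜 1)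
    (heJ : e ∉ Jr h𝒜) (hKe : K = rI e ⊔ Jr h𝒜) {d : G} {x : R} (hx : x ∈ 𝒜 d)
    (hex : e * x = x) (hxe : x * e = x) (hxJ : x ∉ Jr h𝒜) :
    ∃ v : R, v * x - e ∈ Jr h𝒜 := by
  obtain ⟨v, hvh, hev, hve, hvJ⟩ := rinv h𝒜 hK he heh hKe hx hex hxe hxJ
  have hvnJ : v ∉ Jr h𝒜 := by
    intro hcon
    apply heJ
    have h1 : x * v ∈ Jr h𝒜 := Jr_mul_left h𝒜 hcon x
    have : e = x * v - (x * v - e) := by abel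
    rw [this]
    exact sub_mem h1 hvJ
  obtain ⟨w, hwh, hew, hwe, hwJ⟩ := rinv h𝒜 hK he heh hKe hvh hev hve hvnJ
  -- x - w ∈ Jr
  have hxw : x - w ∈ Jr h𝒜 := by
    have h1 : x * (v * w - e) ∈ Jr h𝒜 := Jr_mul_left h𝒜 hwJ x
    have h2 : (x * v - e) * w ∈ Jr h𝒜 := (Jr_gri h𝒜).1 _ hvJ w
    have h3 : x * (v * w - e) = x * v * w - x := by
      rw [mul_sub, hxe, mul_assoc]
    have h4 : (x * v - e) * w = x * v * w - w := by
      rw [sub_mul, hew]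
    have : x - w = (x * v * w - w) - (x * v * w - x) := by abel
    rw [this, ← h3, ← h4]
    exact sub_mem h2 h1
  refine ⟨v, ?_⟩
  have h5 : v * (x - w) ∈ Jr h𝒜 := Jr_mul_left h𝒜 hxw v
  have h6 : v * (x - w) = v * x - v * w := by rw [mul_sub]
  have : v * x - e = (v * x - v * w) + (v * w - e) := by abel
  rw [this, ← h6]
  exact add_mem h5 hwJ

def JrS (h𝒜 : IsGRing 𝒜) : Submodule R R where
  carrier := (Jr h𝒜 : Set R)
  add_mem' := fun ha hb => add_mem ha hb
  zero_mem' := zero_mem _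
  smul_mem' := fun r x hx => by
    have : r * x ∈ Jr h𝒜 := Jr_mul_left h𝒜 hx r
    simpa using this

theorem mem_JrS {x : R} : x ∈ JrS h𝒜 ↔ x ∈ Jr h𝒜 := Iff.rfl

def Lsub (h𝒜 : IsGRing 𝒜) (e : R) : Submodule R R := Submodule.span R {e} ⊔ JrS h𝒜

theorem mem_Lsub {e x : R} : x ∈ Lsub h𝒜 e ↔ ∃ r : R, ∃ j ∈ Jr h𝒜, x = r * e + j := by
  constructor
  · intro hx
    obtain ⟨y, hy, j, hj, rfl⟩ := Submodule.mem_sup.mp hx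
    obtain ⟨r, hr⟩ := Submodule.mem_span_singleton.mp hy
    exact ⟨r, j, hj, by rw [← hr]; rfl⟩
  · rintro ⟨r, j, hj, rfl⟩
    exact Submodule.add_mem_sup (Submodule.mem_span_singleton.mpr ⟨r, rfl⟩) hj

theorem claimD (hart : GrRightArtinian 𝒜) {K : AddSubgroup R} (hK : Atom h𝒜 K) {e : R}
    (he : e * e = e) (heh : e ∈ 𝒜 1) (heJ : e ∉ Jr h𝒜) (hKe : K = rI e ⊔ Jr h𝒜)
    {T : Submodule R R} (hT : CC h𝒜 (T : Set R)) (hJT : JrS h𝒜 ≤ T) (hTL : T ≤ Lsub h𝒜 e)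
    {t0 : R} (ht0T : t0 ∈ T) (ht0J : t0 ∉ Jr h𝒜) : T = Lsub h𝒜 e := by
  obtain ⟨g, ht1T, ht1J⟩ := exists_homog_mem_not_mem h𝒜 hT (N := Jr h𝒜) ht0T ht0J
  set t1 := gp h𝒜 g t0 with ht1
  have ht1h : t1 ∈ 𝒜 g := gp_mem h𝒜 g t0
  -- replace t1 by t := t1 * e ∈ T, still not in Jr, with t * e = t
  obtain ⟨r1, j1, hj1, hrj1⟩ := mem_Lsub h𝒜 |>.mp (hTL ht1T)
  set t := t1 * e with ht
  have htT : t ∈ T := by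
    have hdec : t = t1 - j1 + j1 * e := by
      rw [ht, hrj1]
      rw [add_mul, mul_assoc, he]
      abel
    rw [hdec]
    exact add_mem (sub_mem ht1T (hJT hj1)) (hJT ((Jr_gri h𝒜).1 _ hj1 e))
  have htJ : t ∉ Jr h𝒜 := by
    intro hcon
    apply ht1J
    have hdec : t1 = t + (j1 - j1 * e) := by
      rw [ht, hrj1, add_mul, mul_assoc, he]
      abel
    rw [hdec]
    exact add_mem hcon (sub_mem hj1 ((Jr_gri h𝒜).1 _ hj1 e))
  have hte : t * e = t := by rw [ht, mul_assoc, he]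
  have hth : t ∈ 𝒜 g := by
    have := h𝒜.2.1 g 1 t1 e ht1h heh
    rwa [mul_one] at this
  have htne : t ≠ 0 := fun h => htJ (h ▸ zero_mem _)
  -- t R t is not inside Jr
  obtain ⟨r, hrt⟩ : ∃ r : R, t * r * t ∉ Jr h𝒜 := by
    by_contra hc
    push_neg at hc
    have hsq : prodSG (rI t ⊔ Jr h𝒜) (rI t ⊔ Jr h𝒜) ≤ Jr h𝒜 := by
      refine prodSG_le fun p hp q hq => ?_
      obtain ⟨p1, hp1, pj, hpj, rfl⟩ := AddSubgroup.mem_sup.mp hp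
      obtain ⟨q1, hq1, qj, hqj, rfl⟩ := AddSubgroup.mem_sup.mp hq
      obtain ⟨pr, rfl⟩ := mem_rI.mp hp1
      obtain ⟨qr, rfl⟩ := mem_rI.mp hq1
      have hexp : (t * pr + pj) * (t * qr + qj)
          = ((t * pr * t) * qr + (t * pr) * qj) + (pj * (t * qr) + pj * qj) := by noncomm_ring
      rw [hexp]
      refine add_mem (add_mem ((Jr_gri h𝒜).1 _ (hc pr) qr) (Jr_mul_left h𝒜 hqj _))
        (add_mem ((Jr_gri h𝒜).1 _ hpj _) ((Jr_gri h𝒜).1 _ hpj _))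
    have := nil_sq_le_Jr h𝒜 (gri_sup h𝒜 (rI_gri h𝒜 hth) (Jr_gri h𝒜)) hsq
    exact htJ (this (AddSubgroup.mem_sup_left (self_mem_rI t)))
  -- choose a homogeneous b with t*b*t ∉ Jr
  obtain ⟨k, hbt⟩ : ∃ k, t * gp h𝒜 k r * t ∉ Jr h𝒜 := by
    by_contra hc
    push_neg at hc
    apply hrt
    obtain ⟨s, _, hsum⟩ := gp_support h𝒜 r
    have hdec : t * r * t = ∑ k ∈ s, t * gp h𝒜 k r * t := by
      rw [← Finset.sum_mul, ← Finset.mul_sum, hsum]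
    rw [hdec]
    exact sum_mem fun k _ => hc k
  set b := gp h𝒜 k r with hb
  have hbh : b ∈ 𝒜 k := gp_mem h𝒜 k r
  set c := e * (b * t) with hc'
  have htc : t * c = t * b * t := by
    rw [hc', ← mul_assoc, hte, ← mul_assoc]
  have hcJ : c ∉ Jr h𝒜 := fun hcon => hbt (htc ▸ Jr_mul_left h𝒜 hcon t)
  have hec : e * c = c := by rw [hc', ← mul_assoc, he]
  have hce : c * e = c := by rw [hc', mul_assoc, mul_assoc, hte]
  have hch : c ∈ 𝒜 (k * g) := by
    have h1 : b * t ∈ 𝒜 (k * g) := h𝒜.2.1 _ _ _ _ hbh hth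
    have h2 := h𝒜.2.1 1 (k*g) e (b*t) heh h1
    rwa [one_mul] at h2
  obtain ⟨v, hv⟩ := linv h𝒜 hK he heh heJ hKe hch hec hce hcJ
  have heT : e ∈ T := by
    have h1 : v * c = (v * e * b) * t := by rw [hc']; noncomm_ring
    have h2 : (v * e * b) * t ∈ T := by
      have := T.smul_mem (v * e * b) htT
      rwa [smul_eq_mul] at this
    have h2' : v * c ∈ T := by rw [h1]; exact h2
    have h3 : e = v * c - (v * c - e) := by abel
    rw [h3]
    exact sub_mem h2' (hJT hv)
  refine le_antisymm hTL ?_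
  refine sup_le ?_ hJT
  rw [Submodule.span_le]
  exact Set.singleton_subset_iff.mpr heT

def Good (h𝒜 : IsGRing 𝒜) (e : R) : Prop :=
  e * e = e ∧ e ∈ 𝒜 1 ∧ e ∉ Jr h𝒜 ∧ ∃ K, Atom h𝒜 K ∧ K = rI e ⊔ Jr h𝒜

def Usub (h𝒜 : IsGRing 𝒜) : AddSubgroup R :=
  AddSubgroup.closure ((Jr h𝒜 : Set R) ∪ {x | ∃ e r, Good h𝒜 e ∧ x = e * r})

theorem Jr_le_Usub : (Jr h𝒜 : Set R) ⊆ (Usub h𝒜 : Set R) :=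
  fun _ hx => AddSubgroup.subset_closure (Or.inl hx)

theorem good_mul_mem_Usub {e : R} (he : Good h𝒜 e) (r : R) : e * r ∈ Usub h𝒜 :=
  AddSubgroup.subset_closure (Or.inr ⟨e, r, he, rfl⟩)

theorem rI_sup_Jr_congr {e e' : R} (h : e' - e ∈ Jr h𝒜) :
    rI e' ⊔ Jr h𝒜 = rI e ⊔ Jr h𝒜 := by
  have key : ∀ e₁ e₂ : R, e₂ - e₁ ∈ Jr h𝒜 → rI e₂ ⊔ Jr h𝒜 ≤ rI e₁ ⊔ Jr h𝒜 := by
    intro e₁ e₂ hd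
    refine sup_le ?_ le_sup_right
    intro z hz
    obtain ⟨r, rfl⟩ := mem_rI.mp hz
    have hsplit : e₂ * r = e₁ * r + (e₂ - e₁) * r := by noncomm_ring
    rw [hsplit]
    exact add_mem (AddSubgroup.mem_sup_left (mem_rI.mpr ⟨r, rfl⟩))
      (AddSubgroup.mem_sup_right ((Jr_gri h𝒜).1 _ hd r))
  refine le_antisymm (key e e' h) (key e' e ?_)
  have : e - e' = -(e' - e) := by abel
  rw [this]; exact neg_mem h

theorem one_mem_Usub (hart : GrRightArtinian 𝒜) (hR1 : (1:R) ≠ 0) : (1:R) ∈ Usub h𝒜 := by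
  classical
  obtain ⟨n, hn⟩ := Ppow_eq_bot h𝒜 hart hR1
  set Y : Set (AddSubgroup R) := {Kc | ∃ h : R, h * h = h ∧ h ∈ 𝒜 1 ∧
    (∀ r : R, h * r ∈ Usub h𝒜) ∧ Kc = rI (1 - h)} with hY
  have hYgri : ∀ K ∈ Y, GRI h𝒜 K := by
    rintro K ⟨h, _, hh2, _, rfl⟩
    exact rI_gri h𝒜 (sub_mem h𝒜.1 hh2)
  have hY0 : rI (1 - (0:R)) ∈ Y :=
    ⟨0, by rw [mul_zero], zero_mem _, fun r => by rw [zero_mul]; exact zero_mem _, rfl⟩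
  obtain ⟨Kc, hKcY, hKcmin⟩ := exists_min_gri h𝒜 hart Y hYgri ⟨_, hY0⟩
  obtain ⟨h, hhh, hhA, hhU, rfl⟩ := hKcY
  have hhomog1h : (1:R) - h ∈ 𝒜 1 := sub_mem h𝒜.1 hhA
  -- main claim : rI (1-h) ≤ Jr
  have hmain : rI (1 - h) ≤ Jr h𝒜 := by
    by_contra hnot
    obtain ⟨K, hKatom, hKle⟩ := exists_atom_le h𝒜 hart (rI_gri h𝒜 hhomog1h) hnot
    obtain ⟨e0, he0idem, he0A, he0J, he0K, hKe0⟩ := atom_idem h𝒜 hart hR1 hKatom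
    -- h * e0 ∈ Jr
    have hhe0J : h * e0 ∈ Jr h𝒜 := by
      have he0mem : e0 ∈ rI (1 - h) ⊔ Jr h𝒜 := hKle he0K
      obtain ⟨z, hz, j, hjJ, hzj⟩ := AddSubgroup.mem_sup.mp he0mem
      obtain ⟨s, rfl⟩ := mem_rI.mp hz
      have hcalc : h * ((1 - h) * s + j) = h * j := by
        have h1 : h * ((1 - h) * s) = (h * (1-h)) * s := by rw [mul_assoc]
        have h2 : h * (1 - h) = 0 := by rw [mul_sub, mul_one, hhh, sub_self]
        rw [mul_add, h1, h2, zero_mul, zero_add]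
      rw [hzj] at hcalc
      rw [hcalc]
      exact Jr_mul_left h𝒜 hjJ h
    set dd := h * e0 with hdd
    set et := e0 - dd with het
    have hhet : h * et = 0 := by
      rw [het, hdd, mul_sub, ← mul_assoc, hhh, sub_self]
    have hetA : et ∈ 𝒜 1 := by
      refine sub_mem he0A ?_
      have := h𝒜.2.1 1 1 h e0 hhA he0A
      rwa [one_mul] at this
    have hetJ : et ∉ Jr h𝒜 := by
      intro hcon
      apply he0J
      have : e0 = et + dd := by rw [het]; abel
      rw [this]
      exact add_mem hcon hhe0J
    have hete : et - e0 ∈ Jr h𝒜 := by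
      have : et - e0 = -dd := by rw [het]; abel
      rw [this]; exact neg_mem hhe0J
    have hetq : et * et - et ∈ Jr h𝒜 := by
      have hexp : et * et - et = (e0 * e0 - e0) - e0 * dd - dd * e0 + dd * dd + dd := by
        rw [het]; noncomm_ring
      rw [hexp, he0idem, sub_self]
      refine add_mem (add_mem (sub_mem (sub_mem (zero_mem _) (Jr_mul_left h𝒜 hhe0J e0))
        ((Jr_gri h𝒜).1 _ hhe0J e0)) ?_) hhe0J
      exact (Jr_gri h𝒜).1 _ hhe0J dd
    have hwpow : (et * et - et) ^ (n + 1) = 0 := by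
      have := pow_mem_Ppow h𝒜 hetq n
      rw [hn] at this
      simpa using this
    obtain ⟨e2, he2idem, he2A, he2et, he2kill⟩ := lift_idem h𝒜 hR1 (n+1) et hetA hetq hwpow
    have hhe2 : h * e2 = 0 := he2kill h hhet
    have he2J : e2 ∉ Jr h𝒜 := by
      intro hcon
      apply hetJ
      have : et = e2 - (e2 - et) := by abel
      rw [this]
      exact sub_mem hcon he2et
    have he2e0 : e2 - e0 ∈ Jr h𝒜 := by
      have : e2 - e0 = (e2 - et) + (et - e0) := by abel
      rw [this]
      exact add_mem he2et hete
    have hgoode2 : Good h𝒜 e2 := by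
      refine ⟨he2idem, he2A, he2J, K, hKatom, ?_⟩
      rw [hKe0]
      exact (rI_sup_Jr_congr h𝒜 he2e0).symm
    -- build the bigger idempotent g
    set g := h + e2 - e2 * h with hg
    have h1 : h * (e2 * h) = 0 := by rw [← mul_assoc, hhe2, zero_mul]
    have h2 : e2 * (e2 * h) = e2 * h := by rw [← mul_assoc, he2idem]
    have h3 : (e2 * h) * h = e2 * h := by rw [mul_assoc, hhh]
    have h4 : (e2 * h) * e2 = 0 := by rw [mul_assoc, hhe2, mul_zero]
    have h5 : (e2 * h) * (e2 * h) = 0 := by rw [← mul_assoc, h4, zero_mul]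
    have hgg : g * g = g := by
      have hexp : g * g = h*h + h*e2 - h*(e2*h) + ((e2*h + e2*e2) - e2*(e2*h))
          - ((e2*h)*h + (e2*h)*e2 - (e2*h)*(e2*h)) := by
        rw [hg]; noncomm_ring
      rw [hexp, hhh, hhe2, h1, h2, he2idem, h3, h4, h5, hg]
      abel
    have hgA : g ∈ 𝒜 1 := by
      refine sub_mem (add_mem hhA he2A) ?_
      have := h𝒜.2.1 1 1 e2 h he2A hhA
      rwa [one_mul] at this
    have hgU : ∀ r : R, g * r ∈ Usub h𝒜 := by
      intro r
      have hsplit : g * r = h * r + e2 * (r - h * r) := by rw [hg]; noncomm_ring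
      rw [hsplit]
      exact add_mem (hhU r) (good_mul_mem_Usub h𝒜 hgoode2 _)
    have hYg : rI (1 - g) ∈ Y := ⟨g, hgg, hgA, hgU, rfl⟩
    have hgh : g * h = h := by
      have hexp : g * h = (h * h + e2 * h) - (e2 * h) * h := by rw [hg]; noncomm_ring
      rw [hexp, hhh, h3]
      abel
    have hle : rI (1 - g) ≤ rI (1 - h) := by
      intro z hz
      obtain ⟨r, rfl⟩ := mem_rI.mp hz
      have hfact : (1 - h) * ((1 - g) * r) = (1 - g) * r := by
        have hhg : h * g = h := by
          have hexp : h * g = h * h + h * e2 - h * (e2 * h) := by rw [hg]; noncomm_ring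
          rw [hexp, hhh, hhe2, h1]
          abel
        have hfact2 : (1 - h) * (1 - g) = (1 - g) - (h - h * g) := by noncomm_ring
        have : (1 - h) * (1 - g) = 1 - g := by
          rw [hfact2, hhg]
          abel
        rw [← mul_assoc, this]
      exact mem_rI.mpr ⟨(1 - g) * r, hfact⟩
    have heqKc := hKcmin _ hYg hle
    -- derive contradiction : 1 - h ∈ rI (1 - g) forces e2 = 0
    have h1h : (1:R) - h ∈ rI (1 - g) := by
      rw [heqKc]; exact self_mem_rI _
    obtain ⟨r0, hr0⟩ := mem_rI.mp h1h
    have hg1h : g * (1 - h) = 0 := by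
      rw [← hr0, ← mul_assoc]
      have : g * (1 - g) = 0 := by rw [mul_sub, mul_one, hgg, sub_self]
      rw [this, zero_mul]
    have he2h : e2 = e2 * h := by
      have hcalc : g * (1 - h) = (h - h * h) + (e2 - e2 * h) - ((e2 * h) - (e2 * h) * h) := by
        rw [hg]; noncomm_ring
      rw [hhh, h3] at hcalc
      have hcalc2 : g * (1 - h) = e2 - e2 * h := by rw [hcalc]; abel
      rw [hcalc2] at hg1h
      exact (sub_eq_zero.mp hg1h)
    have : e2 = 0 := by
      have hc1 : e2 * e2 = 0 := by
        nth_rewrite 1 [he2h]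
        rw [mul_assoc, hhe2, mul_zero]
      rw [← he2idem, hc1]
    exact he2J (this ▸ zero_mem _)
  -- conclude 1 ∈ U
  have h1h : (1:R) - h ∈ Jr h𝒜 := hmain (self_mem_rI _)
  have : (1:R) = h * 1 + (1 - h) := by rw [mul_one]; abel
  rw [this]
  exact add_mem (hhU 1) (Jr_le_Usub h𝒜 h1h)

theorem Lsub_cc {e : R} (he : e ∈ 𝒜 1) : CC h𝒜 ((Lsub h𝒜 e : Submodule R R) : Set R) := by
  intro x hx g
  have hx' : x ∈ Lsub h𝒜 e := hx
  obtain ⟨r, j, hj, rfl⟩ := mem_Lsub h𝒜 |>.mp hx'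
  show gp h𝒜 g (r * e + j) ∈ Lsub h𝒜 e
  rw [map_add]
  refine add_mem ?_ ?_
  · rw [gp_mul_right h𝒜 he, inv_one, mul_one]
    exact mem_Lsub h𝒜 |>.mpr ⟨gp h𝒜 g r, 0, zero_mem _, by rw [add_zero]⟩
  · exact mem_Lsub h𝒜 |>.mpr ⟨0, gp h𝒜 g j, (Jr_gri h𝒜).2 j hj g, by rw [zero_mul, zero_add]⟩

theorem exists_transition {P : ℕ → Prop} (h0 : P 0) {n : ℕ} (hn : ¬ P n) :
    ∃ m, P m ∧ ¬ P (m+1) := by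
  induction n with
  | zero => exact absurd h0 hn
  | succ n ih =>
    by_cases h : P n
    · exact ⟨n, h, hn⟩
    · exact ih h
end GradedAux

open GradedAux in
/-- in a graded right Artinian graded ring, every nonzero graded
two-sided ideal contains a minimal graded left ideal. -/
theorem nonzero_graded_ideal_contains_minimal_graded_left_ideal
    (𝒜 : G → AddSubgroup R) (h𝒜 : IsGRing 𝒜) (hart : GrRightArtinian 𝒜)
    (I : Submodule R R) (hIgr : IsGradedLeftIdeal 𝒜 I)
    (hIright : ∀ x ∈ I, ∀ r : R, x * r ∈ I) (hIne : I ≠ ⊥) :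
    ∃ S : Submodule R R, S ≤ I ∧ IsMinGradedLeftIdeal 𝒜 S := by
  classical
  by_cases hR0 : (1:R) = 0
  · exfalso
    apply hIne
    refine le_antisymm (fun x hx => ?_) bot_le
    rw [Submodule.mem_bot]
    calc x = x * 1 := (mul_one x).symm
      _ = 0 := by rw [hR0, mul_zero]
  have hR1 : (1:R) ≠ 0 := hR0
  obtain ⟨n, hn⟩ := Ppow_eq_bot h𝒜 hart hR1
  have hIcc : CC h𝒜 (I : Set R) := (leftIdeal_iff_cc h𝒜).mp hIgr
  set I0 := I.toAddSubgroup with hI0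
  have hI0mem : ∀ {x : R}, x ∈ I0 ↔ x ∈ I := Iff.rfl
  have hI0gri : GRI h𝒜 I0 := ⟨fun x hx r => hIright x hx r, fun x hx g => hIcc x hx g⟩
  have hI0left : ∀ x ∈ I0, ∀ r : R, r * x ∈ I0 := by
    intro x hx r
    have := I.smul_mem r (hI0mem.mp hx)
    rwa [smul_eq_mul] at this
  set Qc : ℕ → AddSubgroup R :=
    (fun k => Nat.rec I0 (fun _ K => prodSG (Jr h𝒜) K) k) with hQc
  have hQ0 : Qc 0 = I0 := rfl
  have hQs : ∀ k, Qc (k+1) = prodSG (Jr h𝒜) (Qc k) := fun k => rfl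
  have hQprop : ∀ k, GRI h𝒜 (Qc k) ∧ (∀ x ∈ Qc k, ∀ r : R, r * x ∈ Qc k) := by
    intro k
    induction k with
    | zero => exact ⟨hI0gri, hI0left⟩
    | succ k ih =>
      exact ⟨⟨prodSG_mul_right ih.1.1, prodSG_cc h𝒜 (Jr_gri h𝒜).2 ih.1.2⟩,
        prodSG_mul_left (fun a ha r => Jr_mul_left h𝒜 ha r)⟩
  have hQanti : ∀ k, Qc (k+1) ≤ Qc k := by
    intro k
    induction k with
    | zero => exact prodSG_le fun j hj q hq => (hQprop 0).2 q hq j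
    | succ k ih => exact prodSG_mono le_rfl ih
  have hQle0 : ∀ k, Qc k ≤ I0 := by
    intro k
    induction k with
    | zero => exact le_rfl
    | succ k ih => exact (hQanti k).trans ih
  have hQP : ∀ k, Qc (k+1) ≤ Ppow h𝒜 k := by
    intro k
    induction k with
    | zero => exact prodSG_le fun j hj q _ => (Jr_gri h𝒜).1 j hj q
    | succ k ih =>
      have h1 : Qc (k+2) ≤ prodSG (Ppow h𝒜 0) (Ppow h𝒜 k) := prodSG_mono le_rfl ih
      have h2 : prodSG (Ppow h𝒜 0) (Ppow h𝒜 k) = Ppow h𝒜 (k+1) := by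
        have h3 := Ppow_add h𝒜 0 k
        have h4 : 0 + k + 1 = k + 1 := by omega
        rw [h4] at h3
        exact h3
      exact h1.trans h2.le
  have hQn1 : Qc (n+1) = ⊥ := le_bot_iff.mp (by rw [← hn]; exact hQP n)
  have hQ0ne : Qc 0 ≠ ⊥ := by
    intro hcon
    apply hIne
    refine le_antisymm (fun x hx => ?_) bot_le
    have hx0 : x ∈ Qc 0 := hI0mem.mpr hx
    rw [hcon] at hx0
    simpa using hx0
  obtain ⟨m, hm1, hm2⟩ := exists_transition (P := fun k => Qc k ≠ ⊥) hQ0ne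
    (n := n+1) (fun h => h hQn1)
  have hQm1 : Qc (m+1) = ⊥ := not_not.mp hm2
  set A0 := Qc m with hA0
  have hA0gri := (hQprop m).1
  have hA0left := (hQprop m).2
  have hA0I : A0 ≤ I0 := hQle0 m
  have hJA0 : ∀ j ∈ Jr h𝒜, ∀ x ∈ A0, j * x = 0 := by
    intro j hj x hx
    have h1 : j * x ∈ Qc (m+1) := mul_mem_prodSG hj hx
    rw [hQm1] at h1
    simpa using h1
  obtain ⟨x0, hx0A, hx0ne⟩ : ∃ x ∈ A0, x ≠ (0:R) := by
    by_contra hc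
    push_neg at hc
    exact hm1 (le_antisymm (fun x hx => AddSubgroup.mem_bot.mpr (hc x hx)) bot_le)
  obtain ⟨ga, hgane⟩ := exists_gp_ne_zero h𝒜 hx0ne
  set a := gp h𝒜 ga x0 with ha
  have haA0 : a ∈ A0 := hA0gri.2 x0 hx0A ga
  have hah : a ∈ 𝒜 ga := gp_mem h𝒜 ga x0
  have hJa : ∀ j ∈ Jr h𝒜, j * a = 0 := fun j hj => hJA0 j hj a haA0
  have h1U := one_mem_Usub h𝒜 hart hR1
  set Va := AddSubgroup.closure {y : R | ∃ e r, Good h𝒜 e ∧ y = e * (r * a)} with hVa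
  have haVa : a ∈ Va := by
    have key : ∀ x ∈ Usub h𝒜, x * a ∈ Va := by
      intro x hx
      induction hx using AddSubgroup.closure_induction with
      | mem y hy =>
        rcases hy with hy | ⟨e, r, hgood, rfl⟩
        · rw [hJa y hy]; exact zero_mem _
        · rw [mul_assoc]; exact AddSubgroup.subset_closure ⟨e, r, hgood, rfl⟩
      | zero => rw [zero_mul]; exact zero_mem _
      | add y z _ _ hy hz => rw [add_mul]; exact add_mem hy hz
      | neg y _ hy => rw [neg_mul]; exact neg_mem hy
    have := key 1 h1U
    rwa [one_mul] at this
  obtain ⟨e, r, hgood, hera⟩ : ∃ e r, Good h𝒜 e ∧ e * (r * a) ≠ 0 := by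
    by_contra hc
    push_neg at hc
    have hVb : Va ≤ ⊥ := by
      rw [hVa, AddSubgroup.closure_le]
      rintro y ⟨e, r, hg, rfl⟩
      simp [hc e r hg]
    exact hgane (by simpa using hVb haVa)
  obtain ⟨kc, hkc⟩ : ∃ k, e * (gp h𝒜 k r * a) ≠ 0 := by
    by_contra hcc
    push_neg at hcc
    apply hera
    obtain ⟨s, _, hsum⟩ := gp_support h𝒜 r
    have hdec : e * (r * a) = ∑ k ∈ s, e * (gp h𝒜 k r * a) := by
      rw [← Finset.mul_sum, ← Finset.sum_mul, hsum]
    rw [hdec]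
    exact Finset.sum_eq_zero fun k _ => hcc k
  set c := gp h𝒜 kc r * a with hc
  have hch : c ∈ 𝒜 (kc * ga) := h𝒜.2.1 _ _ _ _ (gp_mem h𝒜 kc r) hah
  have hcA0 : c ∈ A0 := hA0left a haA0 _
  have hJc : ∀ j ∈ Jr h𝒜, j * c = 0 := by
    intro j hj
    rw [hc, ← mul_assoc]
    exact hJA0 _ ((Jr_gri h𝒜).1 j hj _) a haA0
  have hec : e * c ≠ 0 := by rw [hc]; exact hkc
  obtain ⟨heidem, heA, heJ, K, hKatom, hKe⟩ := hgood
  set φ : R →ₗ[R] R :=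
    { toFun := fun x => x * c,
      map_add' := fun x y => add_mul x y c,
      map_smul' := fun r x => by
        simp only [smul_eq_mul, RingHom.id_apply]
        rw [mul_assoc] } with hφ
  set S := Submodule.map φ (Lsub h𝒜 e) with hS
  have hmemS : ∀ {y : R}, y ∈ S ↔ ∃ x ∈ Lsub h𝒜 e, x * c = y := fun {y} =>
    Submodule.mem_map
  have hSle : S ≤ I := by
    intro y hy
    obtain ⟨x, _, rfl⟩ := hmemS.mp hy
    exact hI0mem.mp (hA0I (hA0left c hcA0 x))
  have hSne : S ≠ ⊥ := by
    intro hcon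
    apply hec
    have heL : e ∈ Lsub h𝒜 e :=
      mem_Lsub h𝒜 |>.mpr ⟨1, 0, zero_mem _, by rw [one_mul, add_zero]⟩
    have h1 : e * c ∈ S := hmemS.mpr ⟨e, heL, rfl⟩
    rw [hcon] at h1
    simpa using h1
  have hScc : CC h𝒜 (S : Set R) := by
    intro y hy g
    have hy' : y ∈ S := hy
    obtain ⟨x, hxL, rfl⟩ := hmemS.mp hy'
    show gp h𝒜 g (x * c) ∈ S
    rw [gp_mul_right h𝒜 hch]
    exact hmemS.mpr ⟨_, Lsub_cc h𝒜 heA x hxL _, rfl⟩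
  have hSgr : IsGradedLeftIdeal 𝒜 S := (leftIdeal_iff_cc h𝒜).mpr hScc
  refine ⟨S, hSle, hSgr, hSne, ?_⟩
  intro T hTS hTgr
  by_cases hTbot : T = ⊥
  · exact Or.inl hTbot
  right
  have hTcc : CC h𝒜 (T : Set R) := (leftIdeal_iff_cc h𝒜).mp hTgr
  obtain ⟨t, htT, htne⟩ := (Submodule.ne_bot_iff T).mp hTbot
  obtain ⟨x, hxL, hxc⟩ := hmemS.mp (hTS htT)
  set W : Submodule R R := Lsub h𝒜 e ⊓ Submodule.comap φ T with hW
  have hmemW : ∀ {z : R}, z ∈ W ↔ z ∈ Lsub h𝒜 e ∧ z * c ∈ T := fun {z} =>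
    Submodule.mem_inf
  have hxW : x ∈ W := hmemW.mpr ⟨hxL, by rw [hxc]; exact htT⟩
  have hxJ : x ∉ Jr h𝒜 := by
    intro hcon
    exact htne (by rw [← hxc, hJc x hcon])
  have hJW : JrS h𝒜 ≤ W := by
    intro j hj
    refine hmemW.mpr ⟨mem_Lsub h𝒜 |>.mpr ⟨0, j, hj, by rw [zero_mul, zero_add]⟩, ?_⟩
    rw [hJc j hj]
    exact zero_mem _
  have hWcc : CC h𝒜 (W : Set R) := by
    intro z hz g
    have hz' : z ∈ W := hz
    obtain ⟨hz1, hz2⟩ := hmemW.mp hz'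
    show gp h𝒜 g z ∈ W
    refine hmemW.mpr ⟨Lsub_cc h𝒜 heA z hz1 g, ?_⟩
    have hkey : gp h𝒜 g z * c = gp h𝒜 (g * (kc * ga)) (z * c) := by
      rw [gp_mul_right h𝒜 hch, mul_inv_cancel_right]
    rw [hkey]
    exact hTcc _ hz2 _
  have hWL : W ≤ Lsub h𝒜 e := inf_le_left
  have hWeq : W = Lsub h𝒜 e :=
    claimD h𝒜 hart hKatom heidem heA heJ hKe hWcc hJW hWL hxW hxJ
  refine le_antisymm hTS ?_
  intro y hy
  obtain ⟨z, hzL, rfl⟩ := hmemS.mp hy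
  have hzW : z ∈ W := hWeq.symm ▸ hzL
  exact (hmemW.mp hzW).2
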